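/- Conversely, if z : ℝ → ℝ is a twice-differentiable solution of z'' + c·z' + b·d·exp(2z) = a·c + b·f(t), then x(t) := exp(z(t)) and y(t) := (a − z'(t))/b define a solution of the system x' = a·x − b·x·y, y' = −c·y + d·x² − f(t) with x(t) > 0 for all t. -/

import Mathlib

theorem stmt1 (a b c d : ℝ) (ha : 0 < a) (hb : 0 < b) (hc : 0 < c) (hd : 0 < d)
    (f : ℝ → ℝ) (hf : Continuous f)
    (z z' z'' : ℝ → ℝ)
    (hz1 : ∀ t, HasDerivAt z (z' t) t)
    (hz2 : ∀ t, HasDerivAt z' (z'' t) t)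
    (heq : ∀ t, z'' t + c * z' t + b * d * Real.exp (2 * z t) = a * c + b * f t) :
    ∀ t,
      HasDerivAt (fun s => Real.exp (z s))
        (a * Real.exp (z t) - b * Real.exp (z t) * ((a - z' t) / b)) t ∧
      HasDerivAt (fun s => (a - z' s) / b)
        (-c * ((a - z' t) / b) + d * (Real.exp (z t)) ^ 2 - f t) t ∧
      0 < Real.exp (z t) := by
  intro t
  have hb' : b ≠ 0 := ne_of_gt hb
  refine ⟨?_, ?_, Real.exp_pos _⟩
  · have h := (hz1 t).exp
    convert h using 1
    field_simp
    ring
  · have h := ((hz2 t).const_sub a).div_const b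
    refine h.congr_deriv (Eq.symm ?_)
    rw [sq, ← Real.exp_add, ← two_mul]
    field_simp
    linear_combination heq t
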